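/- Let m, n be nonzero integers and let q ≥ 1 be a finite integer. Let X be a set with a transitive action of BS(m,n) such that for every x ∈ X the orbit of x under ⟨b⟩ is finite and the (m,n)-phenotype of its cardinality equals q. Set r := q / gcd(q, |m|). Then the 'reduced b-orbit relation' R on X, defined by: x R y if and only if y lies in the orbit of x under b^{k/r}, where k is the cardinality of the ⟨b⟩-orbit of x (note r divides k since q divides k), is invariant under the action of BS(m,n): for all γ ∈ BS(m,n), x R y implies (x·γ) R (y·γ). -/

import Mathlib

/-- The single Baumslag–Solitar relator `t b^m t⁻¹ b^{-n}` in the free group on two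
generators (`false ↦ b`, `true ↦ t`). -/
def BSrel (m n : ℤ) : Set (FreeGroup Bool) :=
  {FreeGroup.of true * FreeGroup.of false ^ m * (FreeGroup.of true)⁻¹ *
    (FreeGroup.of false ^ n)⁻¹}

/-- The Baumslag–Solitar group `BS(m,n) = ⟨b, t ∣ t b^m t⁻¹ = b^n⟩`. -/
abbrev BS (m n : ℤ) : Type := PresentedGroup (BSrel m n)

/-- The generator `b` of `BS(m,n)`. -/
def bGen (m n : ℤ) : BS m n := PresentedGroup.of false

/-- The generator `t` of `BS(m,n)`. -/
def tGen (m n : ℤ) : BS m n := PresentedGroup.of true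

/-- The `(m,n)`-phenotype of a positive integer `L`: the product over all primes `p`
with `v_p(m) = v_p(n) < v_p(L)` of `p^{v_p(L)}` (valuations taken on absolute values). -/
def Phe (m n : ℤ) (L : ℕ) : ℕ :=
  L.factorization.prod fun p e =>
    if m.natAbs.factorization p = n.natAbs.factorization p ∧ n.natAbs.factorization p < e
    then p ^ e else 1

/-- The orbit of a point `x` under the cyclic subgroup `⟨b⟩` of `BS(m,n)`. -/
def bOrbit (m n : ℤ) {X : Type*} [MulAction (BS m n) X] (x : X) : Set X :=
  {y | ∃ k : ℤ, bGen m n ^ k • x = y}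

/-- The reduced `b`-orbit relation: `x R y` iff `y` lies in the orbit of `x` under
`b^{k/r}`, where `k` is the cardinality of the `⟨b⟩`-orbit of `x` and
`r = q / gcd(q, |m|)` is the reduced phenotype. -/
def reducedRel (m n : ℤ) (q : ℕ) {X : Type*} [MulAction (BS m n) X] (x y : X) : Prop :=
  ∃ j : ℤ,
    (bGen m n ^ ((bOrbit m n x).ncard / (q / Nat.gcd q m.natAbs))) ^ j • x = y



/-! ### Factorization of the phenotype -/

lemma Phe_factorization (m n : ℤ) (L : ℕ) (p : ℕ) :
    (Phe m n L).factorization p =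
      if m.natAbs.factorization p = n.natAbs.factorization p ∧
          n.natAbs.factorization p < L.factorization p
      then L.factorization p else 0 := by
  classical
  have hterm : ∀ i ∈ L.factorization.support,
      (if m.natAbs.factorization i = n.natAbs.factorization i ∧
          n.natAbs.factorization i < L.factorization i then i ^ L.factorization i else 1) ≠ 0 := by
    intro i hi
    have hip : i.Prime := Nat.prime_of_mem_primeFactors (by simpa using hi)
    split
    · exact pow_ne_zero _ hip.ne_zero
    · exact one_ne_zero
  unfold Phe
  rw [Finsupp.prod, Nat.factorization_prod hterm, Finsupp.finset_sum_apply,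
    Finset.sum_eq_single p]
  · by_cases hp : p ∈ L.factorization.support
    · have hpp : p.Prime := Nat.prime_of_mem_primeFactors (by simpa using hp)
      split
      · rw [Nat.Prime.factorization_pow hpp, Finsupp.single_eq_same]
      · simp
    · have h0 : L.factorization p = 0 := Finsupp.notMem_support_iff.mp hp
      rw [h0]
      simp
  · intro b hb hbp
    have hbprime : b.Prime := Nat.prime_of_mem_primeFactors (by simpa using hb)
    split
    · rw [Nat.Prime.factorization_pow hbprime, Finsupp.single_eq_of_ne' hbp]
    · simp
  · intro hp
    have h0 : L.factorization p = 0 := Finsupp.notMem_support_iff.mp hp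
    rw [h0]
    simp

/-! ### Arithmetic core lemma -/

lemma alem (q k k' U V M : ℕ) (hq : q ≠ 0) (hk : k ≠ 0) (hk' : k' ≠ 0)
    (hU : U ≠ 0) (hV : V ≠ 0) (hM : M ≠ 0)
    (hP : ∀ p : ℕ, p.Prime → 0 < q.factorization p →
      U.factorization p = M.factorization p ∧ M.factorization p < q.factorization p ∧
      k.factorization p = q.factorization p ∧ k'.factorization p = q.factorization p)
    (hH1 : k / Nat.gcd k U = k' / Nat.gcd k' V) :
    Nat.gcd k U * (q / Nat.gcd q M) ∣ k ∧ (q / Nat.gcd q M) ∣ k' ∧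
      k' * Nat.gcd k U ∣ V * k := by
  have hG : Nat.gcd k U ≠ 0 := Nat.gcd_ne_zero_left hk
  have hG' : Nat.gcd k' V ≠ 0 := Nat.gcd_ne_zero_left hk'
  have hgqM : Nat.gcd q M ≠ 0 := Nat.gcd_ne_zero_left hq
  have hR : q / Nat.gcd q M ≠ 0 :=
    Nat.div_ne_zero_iff_of_dvd (Nat.gcd_dvd_left q M) |>.mpr ⟨hq, hgqM⟩
  have hRf : ∀ p : ℕ, (q / Nat.gcd q M).factorization p =
      q.factorization p - min (q.factorization p) (M.factorization p) := by
    intro p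
    rw [Nat.factorization_div (Nat.gcd_dvd_left q M), Finsupp.tsub_apply,
      Nat.factorization_gcd hq hM, Finsupp.inf_apply]
  have hGf : ∀ p : ℕ, (Nat.gcd k U).factorization p =
      min (k.factorization p) (U.factorization p) := by
    intro p
    rw [Nat.factorization_gcd hk hU, Finsupp.inf_apply]
  have h1p : ∀ p : ℕ, k.factorization p - min (k.factorization p) (U.factorization p)
      = k'.factorization p - min (k'.factorization p) (V.factorization p) := by
    intro p
    have h := congrArg Nat.factorization hH1
    rw [Nat.factorization_div (Nat.gcd_dvd_left k U),
      Nat.factorization_div (Nat.gcd_dvd_left k' V),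
      Nat.factorization_gcd hk hU, Nat.factorization_gcd hk' hV] at h
    have h2 := DFunLike.congr_fun h p
    simpa [Finsupp.tsub_apply, Finsupp.inf_apply] using h2
  refine ⟨?_, ?_, ?_⟩
  · rw [← Nat.factorization_le_iff_dvd (mul_ne_zero hG hR) hk, Finsupp.le_def]
    intro p
    rw [Nat.factorization_mul hG hR, Finsupp.add_apply, hGf, hRf]
    by_cases hpp : p.Prime
    · by_cases hσ : 0 < q.factorization p
      · obtain ⟨e1, e2, e3, e4⟩ := hP p hpp hσ
        omega
      · omega
    · simp [Nat.factorization_eq_zero_of_not_prime _ hpp]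
  · rw [← Nat.factorization_le_iff_dvd hR hk', Finsupp.le_def]
    intro p
    rw [hRf]
    by_cases hpp : p.Prime
    · by_cases hσ : 0 < q.factorization p
      · obtain ⟨e1, e2, e3, e4⟩ := hP p hpp hσ
        omega
      · omega
    · simp [Nat.factorization_eq_zero_of_not_prime _ hpp]
  · rw [← Nat.factorization_le_iff_dvd (mul_ne_zero hk' hG) (mul_ne_zero hV hk),
      Finsupp.le_def]
    intro p
    rw [Nat.factorization_mul hk' hG, Nat.factorization_mul hV hk,
      Finsupp.add_apply, Finsupp.add_apply, hGf]
    by_cases hpp : p.Prime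
    · have h1 := h1p p
      by_cases hσ : 0 < q.factorization p
      · obtain ⟨e1, e2, e3, e4⟩ := hP p hpp hσ
        omega
      · omega
    · simp [Nat.factorization_eq_zero_of_not_prime _ hpp]

/-! ### The Baumslag-Solitar relation -/

lemma bs_rel (m n : ℤ) :
    tGen m n * bGen m n ^ m * (tGen m n)⁻¹ = bGen m n ^ n := by
  have hmem : FreeGroup.of true * FreeGroup.of false ^ m * (FreeGroup.of true)⁻¹ *
      (FreeGroup.of false ^ n)⁻¹ ∈ Subgroup.normalClosure (BSrel m n) :=
    Subgroup.subset_normalClosure (Set.mem_singleton _)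
  have h1 : PresentedGroup.mk (BSrel m n) (FreeGroup.of true * FreeGroup.of false ^ m *
      (FreeGroup.of true)⁻¹ * (FreeGroup.of false ^ n)⁻¹) = 1 :=
    (QuotientGroup.eq_one_iff _).mpr hmem
  have h2 : tGen m n * bGen m n ^ m * (tGen m n)⁻¹ * (bGen m n ^ n)⁻¹ = 1 := by
    simpa [tGen, bGen, PresentedGroup.of, map_mul, map_zpow, map_inv] using h1
  have := mul_eq_one_iff_eq_inv.mp h2
  rw [this, inv_inv]

lemma bs_conj (m n : ℤ) (i : ℤ) :
    tGen m n * bGen m n ^ (m * i) = bGen m n ^ (n * i) * tGen m n := by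
  have h : tGen m n * bGen m n ^ m * (tGen m n)⁻¹ = bGen m n ^ n := bs_rel m n
  have h2 : (tGen m n * bGen m n ^ m * (tGen m n)⁻¹) ^ i = (bGen m n ^ n) ^ i := by rw [h]
  rw [← MulAut.conj_apply, ← map_zpow, MulAut.conj_apply, ← zpow_mul, ← zpow_mul,
    mul_comm n i, mul_comm m i] at h2
  rw [mul_comm m i, mul_comm n i]
  calc tGen m n * bGen m n ^ (i * m)
      = tGen m n * bGen m n ^ (i * m) * (tGen m n)⁻¹ * tGen m n := by group
    _ = bGen m n ^ (i * n) * tGen m n := by rw [h2]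

lemma bs_conj_inv (m n : ℤ) (i : ℤ) :
    (tGen m n)⁻¹ * bGen m n ^ (n * i) = bGen m n ^ (m * i) * (tGen m n)⁻¹ := by
  have h := bs_conj m n i
  calc (tGen m n)⁻¹ * bGen m n ^ (n * i)
      = (tGen m n)⁻¹ * (bGen m n ^ (n * i) * tGen m n) * (tGen m n)⁻¹ := by group
    _ = (tGen m n)⁻¹ * (tGen m n * bGen m n ^ (m * i)) * (tGen m n)⁻¹ := by rw [h]
    _ = bGen m n ^ (m * i) * (tGen m n)⁻¹ := by group

/-! ### Period of a point under `b` -/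

lemma period_spec (m n : ℤ) {X : Type*} [MulAction (BS m n) X] (x : X)
    (hfin : (bOrbit m n x).Finite) :
    0 < (bOrbit m n x).ncard ∧
      ∀ i : ℤ, (bGen m n ^ i • x = x ↔ ((bOrbit m n x).ncard : ℤ) ∣ i) := by
  classical
  set b := bGen m n with hb
  have hcomp : ∀ i j : ℤ, b ^ i • b ^ j • x = b ^ (i + j) • x := by
    intro i j; rw [← mul_smul, ← zpow_add]
  have hdiff : ∀ i j : ℤ, (b ^ i • x = b ^ j • x) ↔ b ^ (i - j) • x = x := by
    intro i j
    constructor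
    · intro h
      have h2 : b ^ (-j) • b ^ i • x = b ^ (-j) • b ^ j • x := by rw [h]
      rw [hcomp, hcomp, neg_add_cancel, zpow_zero, one_smul,
        show -j + i = i - j by ring] at h2
      exact h2
    · intro h
      have h2 : b ^ j • b ^ (i - j) • x = b ^ j • x := by rw [h]
      rw [hcomp, show j + (i - j) = i by ring] at h2
      exact h2
  let S : AddSubgroup ℤ :=
    { carrier := {i : ℤ | b ^ i • x = x}
      add_mem' := by
        intro i j hi hj
        simp only [Set.mem_setOf_eq] at *
        rw [zpow_add, mul_smul, hj, hi]
      zero_mem' := by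
        simp only [Set.mem_setOf_eq, zpow_zero, one_smul]
      neg_mem' := by
        intro i hi
        simp only [Set.mem_setOf_eq] at *
        have h2 : b ^ (-i) • b ^ i • x = b ^ (-i) • x := by rw [hi]
        rw [hcomp, neg_add_cancel, zpow_zero, one_smul] at h2
        exact h2.symm }
  obtain ⟨a, haS⟩ := Int.subgroup_cyclic S
  have hmem : ∀ i : ℤ, b ^ i • x = x ↔ a ∣ i := by
    intro i
    constructor
    · intro hi
      have hi' : i ∈ S := hi
      rw [haS, AddSubgroup.mem_closure_singleton] at hi'
      obtain ⟨c, hc⟩ := hi'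
      exact ⟨c, by rw [← hc]; simp [zsmul_eq_mul]; ring⟩
    · rintro ⟨c, rfl⟩
      have : a * c ∈ S := by
        rw [haS, AddSubgroup.mem_closure_singleton]
        exact ⟨c, by simp [zsmul_eq_mul]; ring⟩
      exact this
  have horb_range : bOrbit m n x = Set.range (fun i : ℤ => b ^ i • x) := by
    ext y; exact ⟨fun ⟨i, hi⟩ => ⟨i, hi⟩, fun ⟨i, hi⟩ => ⟨i, hi⟩⟩
  have ha0 : a ≠ 0 := by
    rintro rfl
    have hinj : Function.Injective (fun i : ℤ => b ^ i • x) := by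
      intro i j hij
      have h1 : b ^ (i - j) • x = x := (hdiff i j).mp hij
      have h2 := (hmem _).mp h1
      rw [zero_dvd_iff, sub_eq_zero] at h2
      exact h2
    exact (horb_range ▸ Set.infinite_range_of_injective hinj) hfin
  set A := a.natAbs with hA
  have hA0 : A ≠ 0 := Int.natAbs_ne_zero.mpr ha0
  haveI : NeZero A := ⟨hA0⟩
  have hmemA : ∀ i : ℤ, b ^ i • x = x ↔ (A : ℤ) ∣ i := by
    intro i
    rw [hmem, hA]
    exact (Int.natAbs_dvd).symm
  set g : ZMod A → X := fun z => b ^ (z.val : ℤ) • x with hg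
  have hginj : Function.Injective g := by
    intro z w hzw
    have h1 : b ^ ((z.val : ℤ) - (w.val : ℤ)) • x = x := (hdiff _ _).mp hzw
    have h2 : (A : ℤ) ∣ (z.val : ℤ) - (w.val : ℤ) := (hmemA _).mp h1
    have h3 : (((z.val : ℤ) - (w.val : ℤ) : ℤ) : ZMod A) = 0 :=
      (ZMod.intCast_zmod_eq_zero_iff_dvd _ _).mpr h2
    push_cast at h3
    rw [sub_eq_zero] at h3
    have h4 : ((z.val : ℕ) : ZMod A) = ((w.val : ℕ) : ZMod A) := by exact_mod_cast h3
    rwa [ZMod.natCast_rightInverse z, ZMod.natCast_rightInverse w] at h4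
  have hrange : bOrbit m n x = Set.range g := by
    rw [horb_range]
    apply Set.eq_of_subset_of_subset
    · rintro y ⟨i, rfl⟩
      refine ⟨(i : ZMod A), ?_⟩
      rw [hg]
      have h2 : (A : ℤ) ∣ ((((i : ZMod A)).val : ℤ) - i) := by
        rw [← ZMod.intCast_zmod_eq_zero_iff_dvd]
        push_cast
        rw [ZMod.natCast_rightInverse ((i : ZMod A)), sub_eq_zero]
      exact (hdiff _ _).mpr ((hmemA _).mpr h2)
    · rintro y ⟨z, rfl⟩
      exact ⟨(z.val : ℤ), rfl⟩
  have hncard : (bOrbit m n x).ncard = A := by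
    rw [hrange, ← Nat.card_coe_set_eq, Nat.card_range_of_injective hginj, Nat.card_zmod]
  rw [hncard]
  exact ⟨Nat.pos_of_ne_zero hA0, hmemA⟩

/-! ### Divisibility helper -/

lemma dvd_mul_iff_div_gcd (k U i : ℕ) (hk : k ≠ 0) :
    k ∣ U * i ↔ k / Nat.gcd k U ∣ i := by
  have hg : 0 < Nat.gcd k U := Nat.gcd_pos_of_pos_left _ (Nat.pos_of_ne_zero hk)
  have hkg : Nat.gcd k U * (k / Nat.gcd k U) = k := Nat.mul_div_cancel' (Nat.gcd_dvd_left k U)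
  have hUg : Nat.gcd k U * (U / Nat.gcd k U) = U := Nat.mul_div_cancel' (Nat.gcd_dvd_right k U)
  have hcop : Nat.Coprime (k / Nat.gcd k U) (U / Nat.gcd k U) :=
    Nat.coprime_div_gcd_div_gcd hg
  constructor
  · intro h
    obtain ⟨d, hd⟩ := h
    have h2 : k / Nat.gcd k U ∣ (U / Nat.gcd k U) * i := by
      refine ⟨d, Nat.eq_of_mul_eq_mul_right hg ?_⟩
      calc (U / Nat.gcd k U * i) * Nat.gcd k U
          = (U / Nat.gcd k U * Nat.gcd k U) * i := by ring
        _ = U * i := by rw [Nat.div_mul_cancel (Nat.gcd_dvd_right k U)]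
        _ = k * d := hd
        _ = (k / Nat.gcd k U * Nat.gcd k U) * d := by
            rw [Nat.div_mul_cancel (Nat.gcd_dvd_left k U)]
        _ = (k / Nat.gcd k U * d) * Nat.gcd k U := by ring
    exact hcop.dvd_of_dvd_mul_left h2
  · intro h
    calc k = Nat.gcd k U * (k / Nat.gcd k U) := hkg.symm
      _ ∣ Nat.gcd k U * ((U / Nat.gcd k U) * i) :=
          mul_dvd_mul_left _ (h.mul_left _)
      _ = U * i := by rw [← mul_assoc, hUg]

/-! ### The main step lemma -/

lemma step (m n : ℤ) (hm : m ≠ 0) (hn : n ≠ 0) (q : ℕ) (hq : 1 ≤ q)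
    {X : Type*} [MulAction (BS m n) X]
    (horb : ∀ x : X, (bOrbit m n x).Finite ∧ Phe m n (bOrbit m n x).ncard = q)
    (γ : BS m n) (u v : ℤ) (hu : u ≠ 0) (hv : v ≠ 0)
    (hUM : u.natAbs = m.natAbs ∨ u.natAbs = n.natAbs)
    (hcomm : ∀ i : ℤ, γ * bGen m n ^ (u * i) = bGen m n ^ (v * i) * γ) :
    ∀ x y : X, reducedRel m n q x y → reducedRel m n q (γ • x) (γ • y) := by
  intro x y hxy
  obtain ⟨j, hj⟩ := hxy
  set b := bGen m n with hbdef
  set U := u.natAbs with hUdef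
  set V := v.natAbs with hVdef
  set M := m.natAbs with hMdef
  set k := (bOrbit m n x).ncard with hkdef
  set k' := (bOrbit m n (γ • x)).ncard with hk'def
  obtain ⟨hkpos, hkiff⟩ := period_spec m n x (horb x).1
  obtain ⟨hk'pos, hk'iff⟩ := period_spec m n (γ • x) (horb (γ • x)).1
  have hq0 : q ≠ 0 := by omega
  have hk0 : k ≠ 0 := hkpos.ne'
  have hk'0 : k' ≠ 0 := hk'pos.ne'
  have hU0 : U ≠ 0 := Int.natAbs_ne_zero.mpr hu
  have hV0 : V ≠ 0 := Int.natAbs_ne_zero.mpr hv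
  have hM0 : M ≠ 0 := Int.natAbs_ne_zero.mpr hm
  have hPk := (horb x).2
  have hPk' := (horb (γ • x)).2
  have hfact : ∀ (L : ℕ), Phe m n L = q → ∀ p : ℕ, p.Prime → 0 < q.factorization p →
      m.natAbs.factorization p = n.natAbs.factorization p ∧
      n.natAbs.factorization p < L.factorization p ∧
      L.factorization p = q.factorization p := by
    intro L hL p hp hσ
    have h := Phe_factorization m n L p
    rw [hL] at h
    by_cases hc : m.natAbs.factorization p = n.natAbs.factorization p ∧
        n.natAbs.factorization p < L.factorization p
    · rw [if_pos hc] at h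
      exact ⟨hc.1, hc.2, h.symm⟩
    · rw [if_neg hc] at h
      omega
  have hP : ∀ p : ℕ, p.Prime → 0 < q.factorization p →
      U.factorization p = M.factorization p ∧ M.factorization p < q.factorization p ∧
      k.factorization p = q.factorization p ∧ k'.factorization p = q.factorization p := by
    intro p hp hσ
    obtain ⟨e1, e2, e3⟩ := hfact k hPk p hp hσ
    obtain ⟨f1, f2, f3⟩ := hfact k' hPk' p hp hσ
    refine ⟨?_, ?_, e3, f3⟩
    · show u.natAbs.factorization p = m.natAbs.factorization p
      rcases hUM with h | h
      · rw [show u.natAbs = m.natAbs from h]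
      · rw [show u.natAbs = n.natAbs from h]
        exact e1.symm
    · show m.natAbs.factorization p < q.factorization p
      omega
  have hdvdZ : ∀ i : ℤ, ((k' : ℤ) ∣ v * i ↔ (k : ℤ) ∣ u * i) := by
    intro i
    rw [← hkiff (u*i), ← hk'iff (v*i)]
    constructor
    · intro h
      have h2 : (b ^ (v * i) * γ) • x = γ • x := by rw [mul_smul]; exact h
      rw [← hcomm i, mul_smul] at h2
      exact MulAction.injective γ h2
    · intro h
      have h2 : (γ * b ^ (u * i)) • x = γ • x := by rw [mul_smul, h]
      rw [hcomm i, mul_smul] at h2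
      exact h2
  have hdvdN : ∀ i : ℕ, (k' ∣ V * i ↔ k ∣ U * i) := by
    intro i
    have h := hdvdZ (i : ℤ)
    rw [← Int.natAbs_dvd_natAbs, ← Int.natAbs_dvd_natAbs (a := (k:ℤ))] at h
    simpa [Int.natAbs_mul] using h
  have hdvd' : ∀ i : ℕ, (k' / Nat.gcd k' V ∣ i ↔ k / Nat.gcd k U ∣ i) := by
    intro i
    rw [← dvd_mul_iff_div_gcd k' V i hk'0, ← dvd_mul_iff_div_gcd k U i hk0]
    exact hdvdN i
  have hH1 : k / Nat.gcd k U = k' / Nat.gcd k' V :=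
    Nat.dvd_antisymm ((hdvd' _).mp dvd_rfl) ((hdvd' _).mpr dvd_rfl)
  obtain ⟨C1, C2, C3⟩ := alem q k k' U V M hq0 hk0 hk'0 hU0 hV0 hM0 hP hH1
  set R := q / Nat.gcd q M with hRdef
  have hR0 : R ≠ 0 := by
    rw [hRdef]
    exact (Nat.div_ne_zero_iff_of_dvd (Nat.gcd_dvd_left q M)).mpr
      ⟨hq0, Nat.gcd_ne_zero_left hq0⟩
  set G := Nat.gcd k U with hGdef
  have hG0 : G ≠ 0 := Nat.gcd_ne_zero_left hk0
  set w := k / (G * R) with hwdef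
  have hwk : G * R * w = k := Nat.mul_div_cancel' C1
  have hkR : k / R = G * w := by
    rw [← hwk, show G * R * w = (G * w) * R by ring]
    exact Nat.mul_div_cancel _ (Nat.pos_of_ne_zero hR0)
  have hbez : (G : ℤ) = u * Int.gcdA u (k : ℤ) + (k : ℤ) * Int.gcdB u (k : ℤ) := by
    have h := Int.gcd_eq_gcd_ab u (k : ℤ)
    rw [show Int.gcd u (k:ℤ) = G from ?_] at h
    · exact h
    · rw [Int.gcd, hGdef, hUdef]
      simp [Nat.gcd_comm]
  set c := Int.gcdA u (k : ℤ) with hcdef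
  set e := Int.gcdB u (k : ℤ) with hedef
  set a' : ℤ := (w : ℤ) * j * c with ha'
  have hua : u * a' = ((k / R : ℕ) : ℤ) * j - (k : ℤ) * ((w:ℤ) * j * e) := by
    have h1 : u * a' = (w:ℤ) * j * (u * c) := by rw [ha']; ring
    rw [h1, show u * c = (G:ℤ) - (k:ℤ) * e by rw [hbez]; ring, hkR]
    push_cast
    ring
  -- rewrite hj into zpow form
  rw [← zpow_natCast b (k / R), ← zpow_mul] at hj
  have hy' : b ^ (u * a') • x = y := by
    rw [hua, sub_eq_add_neg, zpow_add, mul_smul]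
    have h1 : b ^ (-((k:ℤ) * ((w:ℤ) * j * e))) • x = x := by
      rw [hkiff]
      exact ((dvd_refl (k:ℤ)).mul_right _).neg_right
    rw [h1, ← hj]
  have hyy : γ • y = b ^ (v * a') • (γ • x) := by
    rw [← hy', ← mul_smul, hcomm a', mul_smul]
  have h1 : k' / R ∣ V * w := by
    have h2 : (k' / R) * (R * G) ∣ (V * w) * (R * G) := by
      rw [show (k' / R) * (R * G) = (k' / R) * R * G by ring,
        Nat.div_mul_cancel C2,
        show (V * w) * (R * G) = V * (G * R * w) by ring, hwk]
      exact C3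
    exact (Nat.mul_dvd_mul_iff_right
      (Nat.pos_of_ne_zero (mul_ne_zero hR0 hG0))).mp h2
  have hdvdfin : ((k' / R : ℕ) : ℤ) ∣ v * a' := by
    have h3 : (k' / R : ℕ) ∣ (v * a').natAbs := by
      have h4 : (v * a').natAbs = V * w * (j.natAbs * c.natAbs) := by
        rw [ha', show v * ((w:ℤ) * j * c) = (v * (w:ℤ)) * (j * c) by ring,
          Int.natAbs_mul, Int.natAbs_mul, Int.natAbs_mul]
        simp only [Int.natAbs_natCast, hVdef]
      rw [h4]
      exact h1.mul_right _
    exact Int.dvd_natAbs.mp (Int.natCast_dvd_natCast.mpr h3)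
  refine ⟨(v * a') / ((k' / R : ℕ) : ℤ), ?_⟩
  show (b ^ (k' / R)) ^ ((v * a') / ((k' / R : ℕ) : ℤ)) • (γ • x) = γ • y
  rw [← zpow_natCast b (k' / R), ← zpow_mul, Int.mul_ediv_cancel' hdvdfin, hyy]

lemma step_b (m n : ℤ) (q : ℕ) {X : Type*} [MulAction (BS m n) X] (s : ℤ) :
    ∀ x y : X, reducedRel m n q x y →
      reducedRel m n q (bGen m n ^ s • x) (bGen m n ^ s • y) := by
  intro x y hxy
  obtain ⟨j, hj⟩ := hxy
  have horb_eq : bOrbit m n (bGen m n ^ s • x) = bOrbit m n x := by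
    ext z
    constructor
    · rintro ⟨i, rfl⟩
      exact ⟨i + s, by rw [← mul_smul, ← zpow_add]⟩
    · rintro ⟨i, rfl⟩
      exact ⟨i - s, by rw [← mul_smul, ← zpow_add, sub_add_cancel]⟩
  refine ⟨j, ?_⟩
  show (bGen m n ^ ((bOrbit m n (bGen m n ^ s • x)).ncard / (q / Nat.gcd q m.natAbs))) ^ j
      • (bGen m n ^ s • x) = bGen m n ^ s • y
  rw [horb_eq, ← hj,
    ← zpow_natCast (bGen m n) ((bOrbit m n x).ncard / (q / Nat.gcd q m.natAbs)), ← zpow_mul,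
    ← mul_smul, ← mul_smul, ← zpow_add, ← zpow_add, add_comm]

/-- For a transitive `BS(m,n)`-action with all `⟨b⟩`-orbits finite of phenotype `q`,
the reduced `b`-orbit relation is invariant under the action. -/
theorem reducedRel_invariant (m n : ℤ) (hm : m ≠ 0) (hn : n ≠ 0)
    (q : ℕ) (hq : 1 ≤ q) (X : Type*) [MulAction (BS m n) X]
    (htrans : ∀ x y : X, ∃ γ : BS m n, γ • x = y)
    (horb : ∀ x : X, (bOrbit m n x).Finite ∧ Phe m n (bOrbit m n x).ncard = q) :
    ∀ (γ : BS m n) (x y : X),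
      reducedRel m n q x y → reducedRel m n q (γ • x) (γ • y) := by
  have key : ∀ w : FreeGroup Bool, ∀ x y : X, reducedRel m n q x y →
      reducedRel m n q (PresentedGroup.mk (BSrel m n) w • x)
        (PresentedGroup.mk (BSrel m n) w • y) := by
    intro w
    induction w using FreeGroup.induction_on with
    | C1 =>
      intro x y h
      rw [map_one, one_smul, one_smul]
      exact h
    | of z =>
      cases z with
      | false =>
        intro x y h
        have h2 := step_b m n q 1 x y h
        rw [zpow_one] at h2
        exact h2
      | true =>
        intro x y h
        exact step m n hm hn q hq horb (tGen m n) m n hm hn (Or.inl rfl)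
          (fun i => bs_conj m n i) x y h
    | inv_of z _ih =>
      cases z with
      | false =>
        intro x y h
        have h2 := step_b m n q (-1) x y h
        rw [zpow_neg_one] at h2
        rw [map_inv]
        exact h2
      | true =>
        intro x y h
        rw [map_inv]
        exact step m n hm hn q hq horb (tGen m n)⁻¹ n m hn hm (Or.inr rfl)
          (fun i => bs_conj_inv m n i) x y h
    | mul w1 w2 ih1 ih2 =>
      intro x y h
      rw [map_mul, mul_smul, mul_smul]
      exact ih1 _ _ (ih2 _ _ h)
  intro γ x y h
  obtain ⟨w, rfl⟩ := PresentedGroup.mk_surjective (BSrel m n) γ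
  exact key w x y h
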